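/- Let Γ_B = -(1/2) Σ_{i,j=1}^m vᵢ(vⱼ L_{ij}) with L_{ij} = xᵢ∂ⱼ - xⱼ∂ᵢ be the spherical Dirac operator on a hypercomplex subspace M of dimension m+1. Then Γ_B applied to the identity function x ↦ x equals (m-1)·Im(x), where Im(x) = (x - x^c)/2. -/
import Mathlib


noncomputable section
namespace PaperStmt

variable {A : Type*} [NormedAddCommGroup A] [NormedSpace ℝ A] [One A] [Mul A] {m : ℕ}

/-- Partial derivative in the `i`-th coordinate direction. -/
def pd (i : Fin (m + 1)) (f : (Fin (m + 1) → ℝ) → A) : (Fin (m + 1) → ℝ) → A :=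
  fun x => fderiv ℝ f x (Pi.single i 1)

/-- The tangential operator `L_{ij} = xᵢ ∂ⱼ - xⱼ ∂ᵢ`. -/
def Lop (i j : Fin (m + 1)) (f : (Fin (m + 1) → ℝ) → A) : (Fin (m + 1) → ℝ) → A :=
  fun x => x i • pd j f x - x j • pd i f x

/-- The spherical Dirac operator `Γ_B = -(1/2) ∑_{i,j=1}^m vᵢ (vⱼ L_{ij})`. -/
def Gam (v : Fin (m + 1) → A) (f : (Fin (m + 1) → ℝ) → A) : (Fin (m + 1) → ℝ) → A :=
  fun x => -((2 : ℝ)⁻¹ •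
    ∑ i ∈ Finset.univ.erase (0 : Fin (m + 1)),
      ∑ j ∈ Finset.univ.erase (0 : Fin (m + 1)), v i * (v j * Lop i j f x))

/-- The point of the hypercomplex subspace `M` with coordinates `x` w.r.t. the
basis `(1, v₁, …, v_m)`. -/
def iot (v : Fin (m + 1) → A) (x : Fin (m + 1) → ℝ) : A :=
  ∑ i : Fin (m + 1), x i • v i

/-- The spherical Dirac operator `Γ_B` applied to the identity function
`x ↦ x` of a hypercomplex subspace `M` of dimension `m+1` equals
`(m-1)·Im(x)`, where `Im(x) = (x - xᶜ)/2 = ∑_{i=1}^m xᵢ vᵢ`. -/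
theorem gamma_of_identity
    (hbil : IsBoundedBilinearMap ℝ fun p : A × A => p.1 * p.2)
    (hone : ∀ a : A, 1 * a = a) (hone' : ∀ a : A, a * 1 = a)
    (hLA : ∀ x y : A, x * x * y = x * (x * y))
    (hRA : ∀ x y : A, x * y * y = x * (y * y))
    (hFA : ∀ x y : A, x * y * x = x * (y * x))
    (hm : 2 ≤ m)
    (v : Fin (m + 1) → A) (hv0 : v 0 = 1)
    (hsq : ∀ i : Fin (m + 1), i ≠ 0 → v i * v i = -1)
    (hanti : ∀ i j : Fin (m + 1), i ≠ 0 → j ≠ 0 → i ≠ j → v i * v j = -(v j * v i)) :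
    ∀ x : Fin (m + 1) → ℝ,
      Gam v (iot v) x
        = ((m : ℝ) - 1) • ∑ i ∈ Finset.univ.erase (0 : Fin (m + 1)), x i • v i := by
  -- algebra helpers
  have sl : ∀ (c : ℝ) (a b : A), (c • a) * b = c • (a * b) := fun c a b => hbil.smul_left c a b
  have sr : ∀ (c : ℝ) (a b : A), a * (c • b) = c • (a * b) := fun c a b => hbil.smul_right c a b
  have nr : ∀ a b : A, a * (-b) = -(a * b) := by
    intro a b; rw [← neg_one_smul ℝ b, sr, neg_one_smul]
  have subr : ∀ a b c : A, a * (b - c) = a * b - a * c := by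
    intro a b c
    rw [sub_eq_add_neg, hbil.add_right a b (-c), nr, ← sub_eq_add_neg]
  have mz : ∀ a : A, a * (0 : A) = 0 := by
    intro a; simpa using sr 0 a 0
  have negone : ∀ a : A, a * (-1 : A) = -a := by
    intro a; rw [nr, hone']
  have negone' : ∀ a : A, (-1 : A) * a = -a := by
    intro a; rw [← neg_one_smul ℝ (1 : A), sl, hone, neg_one_smul]
  intro x
  set E := Finset.univ.erase (0 : Fin (m + 1)) with hE
  have hcard : E.card = m := by
    simp [hE]
  set S := ∑ i ∈ E, x i • v i with hS
  have hpd : ∀ j : Fin (m + 1), pd j (iot v) x = v j := by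
    intro j
    set L : (Fin (m + 1) → ℝ) →L[ℝ] A :=
      ∑ i : Fin (m + 1),
        (ContinuousLinearMap.proj i : ((Fin (m + 1) → ℝ) →L[ℝ] ℝ)).smulRight (v i) with hLdef
    have hiot : iot v = ⇑L := by
      funext y
      simp [iot, hLdef, ContinuousLinearMap.sum_apply]
    show fderiv ℝ (iot v) x (Pi.single j 1) = v j
    rw [hiot, ContinuousLinearMap.fderiv]
    simp [hLdef, ContinuousLinearMap.sum_apply, Pi.single_apply]
  have hLop : ∀ i j : Fin (m + 1), Lop i j (iot v) x = x i • v j - x j • v i := by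
    intro i j
    show x i • pd j (iot v) x - x j • pd i (iot v) x = _
    rw [hpd, hpd]
  have hterm : ∀ i j : Fin (m + 1), i ≠ 0 → j ≠ 0 → j ≠ i →
      v i * (v j * Lop i j (iot v) x) = -(x i • v i) - x j • v j := by
    intro i j hi hj hji
    rw [hLop, subr, sr, sr, subr, sr, sr, hsq j hj, negone,
      hanti j i hj hi hji, nr, ← hLA, hsq i hi, negone', neg_neg, smul_neg]
  have hinner : ∀ i ∈ E, ∑ j ∈ E, v i * (v j * Lop i j (iot v) x)
      = ((2 : ℝ) - m) • (x i • v i) - S := by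
    intro i hi
    have hi0 : i ≠ 0 := Finset.ne_of_mem_erase hi
    rw [← Finset.add_sum_erase E _ hi]
    have hdiag : v i * (v i * Lop i i (iot v) x) = 0 := by
      rw [hLop, sub_self, mz, mz]
    rw [hdiag, zero_add]
    have : ∀ j ∈ E.erase i, v i * (v j * Lop i j (iot v) x)
        = -(x i • v i) - x j • v j := by
      intro j hj
      exact hterm i j hi0 (Finset.ne_of_mem_erase (Finset.mem_of_mem_erase hj))
        (Finset.ne_of_mem_erase hj)
    have hse : ∑ j ∈ E.erase i, x j • v j = S - x i • v i := by
      rw [hS, ← Finset.add_sum_erase E _ hi]; abel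
    rw [Finset.sum_congr rfl this, Finset.sum_sub_distrib, Finset.sum_neg_distrib,
      Finset.sum_const, Finset.card_erase_of_mem hi, hcard, hse,
      ← Nat.cast_smul_eq_nsmul ℝ, Nat.cast_sub (by omega), Nat.cast_one]
    module
  rw [show Gam v (iot v) x = -((2 : ℝ)⁻¹ •
      ∑ i ∈ E, ∑ j ∈ E, v i * (v j * Lop i j (iot v) x)) from rfl,
    Finset.sum_congr rfl hinner, Finset.sum_sub_distrib, Finset.sum_const, hcard,
    ← Finset.smul_sum, ← hS, ← Nat.cast_smul_eq_nsmul ℝ]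
  module


end PaperStmt
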